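/- Let A ∈ ℝ^{m×n} have an economy-sized SVD with k-dominant left singular subspace U₁, and let 0 ≤ p′ ≤ p be integers. Let Ω be a standard Gaussian random n×(k+p) matrix and Ω′ a standard Gaussian random n×(k+p′) matrix. Then for every real t, ℙ( sinθ₁(U₁, range(AΩ)) < t ) ≥ ℙ( sinθ₁(U₁, range(AΩ′)) < t ). That is, the cumulative distribution function of the largest principal angle of the randomized range finder is pointwise increasing in the oversampling parameter p. -/

import Mathlib

open MeasureTheory ProbabilityTheory Matrix

noncomputable section

/-- Matrices carry the product (Borel) measurable structure, entrywise. -/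
instance (n ℓ : ℕ) : MeasurableSpace (Matrix (Fin n) (Fin ℓ) ℝ) := MeasurableSpace.pi

/-- The law of a standard Gaussian random `n × ℓ` matrix: i.i.d. `N(0,1)` entries. -/
def stdGaussMat (n ℓ : ℕ) : Measure (Matrix (Fin n) (Fin ℓ) ℝ) :=
  Measure.pi fun _ : Fin n => Measure.pi fun _ : Fin ℓ => gaussianReal 0 1

/-- Identification of `Fin m → ℝ` with Euclidean space `ℝ^m`. -/
def toE {m : ℕ} : (Fin m → ℝ) ≃ₗ[ℝ] EuclideanSpace ℝ (Fin m) :=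
  (WithLp.linearEquiv 2 ℝ (Fin m → ℝ)).symm

/-- The column space of a matrix, as a subspace of Euclidean space. -/
def colSpaceE {m n : ℕ} (A : Matrix (Fin m) (Fin n) ℝ) :
    Submodule ℝ (EuclideanSpace ℝ (Fin m)) :=
  (LinearMap.range A.mulVecLin).map toE.toLinearMap

/-- The sine of the largest principal angle between subspaces `U` and `W`:
`‖(id − P_W) ∘ P_U‖`, where `P` denotes orthogonal projection. -/
def sinTheta {H : Type} [NormedAddCommGroup H] [InnerProductSpace ℝ H]
    [FiniteDimensional ℝ H] (U W : Submodule ℝ H) : ℝ :=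
  ‖((ContinuousLinearMap.id ℝ H) - W.subtypeL.comp W.orthogonalProjectionOnto).comp
      (U.subtypeL.comp U.orthogonalProjectionOnto)‖

/-- The span of the first `k` columns of a matrix `U`, as a subspace of Euclidean space. -/
def spanCols {m N : ℕ} (U : Matrix (Fin m) (Fin N) ℝ) (k : ℕ) :
    Submodule ℝ (EuclideanSpace ℝ (Fin m)) :=
  Submodule.span ℝ {x | ∃ j : Fin N, (j : ℕ) < k ∧ x = toE (fun i => U i j)}

/-- Auxiliary: `piCongrRight` of componentwise measure-preserving equivs is
measure preserving for the pi measures. -/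
theorem myMP_piCongrRight {ι : Type*} [Fintype ι] {α β : ι → Type*}
    [∀ i, MeasurableSpace (α i)] [∀ i, MeasurableSpace (β i)]
    (e : ∀ i, α i ≃ᵐ β i) (μ : ∀ i, Measure (α i)) (ν : ∀ i, Measure (β i))
    [∀ i, SigmaFinite (μ i)] [∀ i, SigmaFinite (ν i)]
    (h : ∀ i, MeasurePreserving (e i) (μ i) (ν i)) :
    MeasurePreserving (MeasurableEquiv.piCongrRight e) (Measure.pi μ) (Measure.pi ν) := by
  constructor
  · exact (MeasurableEquiv.piCongrRight e).measurable
  · refine (Measure.pi_eq fun s hs => ?_).symm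
    rw [MeasurableEquiv.map_apply]
    have : (MeasurableEquiv.piCongrRight e) ⁻¹' (Set.univ.pi s) =
        Set.univ.pi (fun i => (e i) ⁻¹' (s i)) := by
      ext x; simp [MeasurableEquiv.piCongrRight, Equiv.piCongrRight, Set.mem_pi]
    rw [this, Measure.pi_pi]
    exact Finset.prod_congr rfl fun i _ => (h i).measure_preimage (hs i).nullMeasurableSet

/-- Auxiliary: `sinTheta U ·` is antitone in the second argument. -/
theorem my_sinTheta_antitone {H : Type} [NormedAddCommGroup H] [InnerProductSpace ℝ H]
    [FiniteDimensional ℝ H] (U : Submodule ℝ H) {W W' : Submodule ℝ H} (h : W ≤ W') :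
    sinTheta U W' ≤ sinTheta U W := by
  refine ContinuousLinearMap.opNorm_le_bound _ (norm_nonneg _) fun x => ?_
  set y : H := (U.subtypeL.comp (U.orthogonalProjectionOnto)) x with hy
  have h1 : ‖y - (W'.orthogonalProjectionOnto y : H)‖ ≤ ‖y - (W.orthogonalProjectionOnto y : H)‖ := by
    rw [← Submodule.starProjection_apply, Submodule.starProjection_minimal]
    have hb : BddBelow (Set.range fun x : W' => ‖y - (x : H)‖) :=
      ⟨0, by rintro _ ⟨z, rfl⟩; exact norm_nonneg _⟩
    exact ciInf_le hb ⟨(W.orthogonalProjectionOnto y : H), h (W.orthogonalProjectionOnto y).2⟩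
  calc ‖(((ContinuousLinearMap.id ℝ H) - W'.subtypeL.comp (W'.orthogonalProjectionOnto)).comp
      (U.subtypeL.comp (U.orthogonalProjectionOnto))) x‖
      = ‖y - (W'.orthogonalProjectionOnto y : H)‖ := by
        simp [ContinuousLinearMap.comp_apply, ContinuousLinearMap.sub_apply, hy]
    _ ≤ ‖y - (W.orthogonalProjectionOnto y : H)‖ := h1
    _ = ‖(((ContinuousLinearMap.id ℝ H) - W.subtypeL.comp (W.orthogonalProjectionOnto)).comp
      (U.subtypeL.comp (U.orthogonalProjectionOnto))) x‖ := by
        simp [ContinuousLinearMap.comp_apply, ContinuousLinearMap.sub_apply, hy]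
    _ ≤ sinTheta U W * ‖x‖ := ContinuousLinearMap.le_opNorm _ x

/-- Auxiliary: the column space of a matrix of leading columns is contained in
the full column space. -/
theorem my_colSpaceE_submatrix_le {m ℓ' ℓ : ℕ} (h : ℓ' ≤ ℓ) (B : Matrix (Fin m) (Fin ℓ) ℝ) :
    colSpaceE (B.submatrix id (Fin.castLE h)) ≤ colSpaceE B := by
  apply Submodule.map_mono
  rintro _ ⟨x, rfl⟩
  refine ⟨fun j => if hj : (j : ℕ) < ℓ' then x ⟨j, hj⟩ else 0, ?_⟩
  ext i
  show ∑ j : Fin ℓ, B i j * _ = ∑ j' : Fin ℓ', B i (Fin.castLE h j') * x j'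
  rw [← Finset.sum_subset (Finset.subset_univ
      ((Finset.univ : Finset (Fin ℓ')).image (Fin.castLE h)))]
  · rw [Finset.sum_image (fun a _ b _ hab => Fin.castLE_injective h hab)]
    refine Finset.sum_congr rfl fun j' _ => ?_
    rw [dif_pos (by simp)]
    congr 1
  · intro j _ hj
    rw [dif_neg, mul_zero]
    intro hlt
    exact hj (Finset.mem_image.2 ⟨⟨j, hlt⟩, Finset.mem_univ _, by ext; simp⟩)

/-- The cumulative distribution function of the largest principal angle of the randomized
range finder is pointwise increasing in the oversampling parameter: for `0 ≤ p′ ≤ p` and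
every real `t`,
`ℙ(sin θ₁(U₁, range(AΩ)) < t) ≥ ℙ(sin θ₁(U₁, range(AΩ′)) < t)`,
where `Ω`, `Ω′` are standard Gaussian `n × (k+p)` and `n × (k+p′)` matrices. -/
theorem cdf_monotone_oversampling (m n : ℕ) (A : Matrix (Fin m) (Fin n) ℝ)
    (k p p' : ℕ) (hp : p' ≤ p) (hk : k ≤ min m n)
    (U : Matrix (Fin m) (Fin (min m n)) ℝ) (V : Matrix (Fin n) (Fin (min m n)) ℝ)
    (σ : Fin (min m n) → ℝ)
    (hU : Uᵀ * U = 1) (hV : Vᵀ * V = 1)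
    (hσ_mono : ∀ i j : Fin (min m n), i ≤ j → σ j ≤ σ i)
    (hσ_nonneg : ∀ j, 0 ≤ σ j)
    (hSVD : A = U * Matrix.diagonal σ * Vᵀ) (t : ℝ) :
    stdGaussMat n (k + p') {Ω' | sinTheta (spanCols U k) (colSpaceE (A * Ω')) < t}
      ≤ stdGaussMat n (k + p) {Ω | sinTheta (spanCols U k) (colSpaceE (A * Ω)) < t} := by
  have hle : k + p' ≤ k + p := by omega
  have h1 : (k + p') + (p - p') = k + p := by omega
  let ι : Fin (k + p') ⊕ Fin (p - p') ≃ Fin (k + p) := finSumFinEquiv.trans (finCongr h1)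
  let χ : (Fin (k + p) → ℝ) ≃ᵐ (Fin (k + p') → ℝ) × (Fin (p - p') → ℝ) :=
    (MeasurableEquiv.piCongrLeft (fun _ => ℝ) ι).symm.trans
      (MeasurableEquiv.sumPiEquivProdPi (fun _ : Fin (k + p') ⊕ Fin (p - p') => ℝ))
  have hχ : MeasurePreserving χ (Measure.pi fun _ : Fin (k + p) => gaussianReal 0 1)
      ((Measure.pi fun _ : Fin (k + p') => gaussianReal 0 1).prod
        (Measure.pi fun _ : Fin (p - p') => gaussianReal 0 1)) :=
    (measurePreserving_sumPiEquivProdPi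
        (fun _ : Fin (k + p') ⊕ Fin (p - p') => gaussianReal 0 1)).comp
      ((measurePreserving_piCongrLeft (fun _ : Fin (k + p) => gaussianReal 0 1) ι).symm _)
  let E : (Fin n → Fin (k + p) → ℝ) ≃ᵐ
      (Fin n → Fin (k + p') → ℝ) × (Fin n → Fin (p - p') → ℝ) :=
    (MeasurableEquiv.piCongrRight (fun _ : Fin n => χ)).trans
      (MeasurableEquiv.arrowProdEquivProdArrow _ _ _)
  have hE : MeasurePreserving E (stdGaussMat n (k + p))
      ((stdGaussMat n (k + p')).prod (stdGaussMat n (p - p'))) :=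
    (measurePreserving_arrowProdEquivProdArrow _ _ _ _ _).comp
      (myMP_piCongrRight _ _ _ (fun _ => hχ))
  set S' : Set (Matrix (Fin n) (Fin (k + p')) ℝ) :=
    {Ω' | sinTheta (spanCols U k) (colSpaceE (A * Ω')) < t} with hS'
  set S : Set (Matrix (Fin n) (Fin (k + p)) ℝ) :=
    {Ω | sinTheta (spanCols U k) (colSpaceE (A * Ω)) < t} with hS
  have hfirst : ∀ Ω : Matrix (Fin n) (Fin (k + p)) ℝ,
      (E Ω).1 = Ω.submatrix id (Fin.castLE hle) := fun _ => rfl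
  have hsub : E ⁻¹' (S' ×ˢ (Set.univ : Set (Matrix (Fin n) (Fin (p - p')) ℝ))) ⊆ S := by
    intro Ω0 hΩ
    set Ω : Matrix (Fin n) (Fin (k + p)) ℝ := Ω0 with hΩ0
    have hmem : sinTheta (spanCols U k)
        (colSpaceE (A * (Ω.submatrix id (Fin.castLE hle)))) < t := by
      have h2 := hΩ.1
      rwa [hS', Set.mem_setOf_eq, hfirst Ω] at h2
    have hmul : A * (Ω.submatrix id (Fin.castLE hle)) = (A * Ω).submatrix id (Fin.castLE hle) := by
      ext i j; simp [Matrix.mul_apply]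
    have hcs : colSpaceE (A * (Ω.submatrix id (Fin.castLE hle))) ≤ colSpaceE (A * Ω) := by
      rw [hmul]; exact my_colSpaceE_submatrix_le hle (A * Ω)
    exact lt_of_le_of_lt (my_sinTheta_antitone _ hcs) hmem
  haveI i1 : IsProbabilityMeasure (stdGaussMat n (p - p')) :=
    inferInstanceAs (IsProbabilityMeasure
      (Measure.pi fun _ : Fin n => Measure.pi fun _ : Fin (p - p') => gaussianReal 0 1))
  haveI i2 : SigmaFinite (stdGaussMat n (p - p')) := inferInstance
  calc stdGaussMat n (k + p') S'
      = ((stdGaussMat n (k + p')).prod (stdGaussMat n (p - p')))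
          (S' ×ˢ (Set.univ : Set (Matrix (Fin n) (Fin (p - p')) ℝ))) := by
        rw [Measure.prod_prod, measure_univ, mul_one]
    _ = stdGaussMat n (k + p)
          (E ⁻¹' (S' ×ˢ (Set.univ : Set (Matrix (Fin n) (Fin (p - p')) ℝ)))) := by
        have hmap := E.map_apply (μ := stdGaussMat n (k + p))
          (S' ×ˢ (Set.univ : Set (Matrix (Fin n) (Fin (p - p')) ℝ)))
        exact (congrArg (fun ν : Measure ((Fin n → Fin (k + p') → ℝ) × (Fin n → Fin (p - p') → ℝ)) => ν (S' ×ˢ (Set.univ : Set (Matrix (Fin n) (Fin (p - p')) ℝ))))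
          hE.map_eq).symm.trans hmap
    _ ≤ stdGaussMat n (k + p) S := measure_mono hsub
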